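/- Let (Ω, F, P) be a probability space with a filtration (F_t)_{t ≥ 1}, and let (Y_t)_{t ≥ 1} be a real-valued martingale with respect to (F_t) with Y_1 = 0 and bounded increments |Y_t − Y_{t−1}| ≤ α almost surely for all t ≥ 2 (α > 0). Let (X_t)_{t ≥ 2} be a predictable process (X_t is F_{t−1}-measurable) with almost surely nonnegative increments and X_t → ∞ as t → ∞, and let W_t = Σ_{τ=2}^t E[(Y_τ − Y_{τ−1})² | F_{τ−1}] be the predictable quadratic variation of Y. If there is a constant c₁ > 0 such that almost surely W_t ≤ c₁ X_t for all t, then almost surely Y_t ≥ X_t for only finitely many t. -/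

import Mathlib

open MeasureTheory Filter

private lemma telescope_sum' (Z : ℕ → ℝ) {n : ℕ} (hn : 1 ≤ n) :
    ∑ τ ∈ Finset.Icc 2 n, (Z τ - Z (τ - 1)) = Z n - Z 1 := by
  induction n, hn using Nat.le_induction with
  | base => simp
  | succ n hn ih =>
    have hins : Finset.Icc 2 (n + 1) = insert (n + 1) (Finset.Icc 2 n) := by
      ext a; simp [Finset.mem_Icc]; omega
    rw [hins, Finset.sum_insert (by simp [Finset.mem_Icc])]
    have h1 : n + 1 - 1 = n := by omega
    rw [h1, ih]
    ring

theorem martingale_eventually_below_compensator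
    {Ω : Type*} {m0 : MeasurableSpace Ω} {P : Measure Ω} [IsProbabilityMeasure P]
    (ℱ : Filtration ℕ m0) (Y X W : ℕ → Ω → ℝ) (α c₁ : ℝ) (hα : 0 < α) (hc₁ : 0 < c₁)
    (hY : Martingale Y ℱ P)
    (hY1 : ∀ᵐ ω ∂P, Y 1 ω = 0)
    (hbdd : ∀ t : ℕ, 2 ≤ t → ∀ᵐ ω ∂P, |Y t ω - Y (t - 1) ω| ≤ α)
    (hXmeas : ∀ t : ℕ, 2 ≤ t → Measurable[ℱ (t - 1)] (X t))
    (hXincr : ∀ᵐ ω ∂P, ∀ t : ℕ, X t ω ≤ X (t + 1) ω)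
    (hXtop : ∀ᵐ ω ∂P, Tendsto (fun t => X t ω) atTop atTop)
    (hW : ∀ t : ℕ, W t
      = fun ω => ∑ τ ∈ Finset.Icc 2 t,
          (P[(fun ω' => (Y τ ω' - Y (τ - 1) ω') ^ 2)|ℱ (τ - 1)]) ω)
    (hWX : ∀ᵐ ω ∂P, ∀ t : ℕ, W t ω ≤ c₁ * X t ω) :
    ∀ᵐ ω ∂P, {t : ℕ | X t ω ≤ Y t ω}.Finite := by
  classical
  -- basic measurability and integrability facts
  have hYm : ∀ t, Measurable (Y t) := fun t =>
    ((hY.stronglyAdapted t).measurable).mono (ℱ.le t) le_rfl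
  have hdm : ∀ τ : ℕ, Measurable fun ω => Y τ ω - Y (τ - 1) ω := fun τ =>
    (hYm τ).sub (hYm (τ - 1))
  have hbint : ∀ (f : Ω → ℝ) (c : ℝ), Measurable f → (∀ᵐ ω ∂P, |f ω| ≤ c) →
      Integrable f P := by
    intro f c hf hb
    exact (integrable_const c).mono' hf.aestronglyMeasurable
      (by simpa [Real.norm_eq_abs] using hb)
  have hdb : ∀ᵐ ω ∂P, ∀ τ : ℕ, 2 ≤ τ → |Y τ ω - Y (τ - 1) ω| ≤ α := by
    rw [ae_all_iff]
    intro τ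
    by_cases h : 2 ≤ τ
    · filter_upwards [hbdd τ h] with ω hω _
      exact hω
    · filter_upwards with ω h'
      exact absurd h' h
  have hcond0 : ∀ τ : ℕ, 2 ≤ τ →
      P[fun ω => Y τ ω - Y (τ - 1) ω|ℱ (τ - 1)] =ᵐ[P] 0 := by
    intro τ h
    have h1 : P[Y τ - Y (τ - 1)|ℱ (τ - 1)]
        =ᵐ[P] P[Y τ|ℱ (τ - 1)] - P[Y (τ - 1)|ℱ (τ - 1)] :=
      condExp_sub (hY.integrable τ) (hY.integrable (τ - 1)) _
    have h2 := hY.condExp_ae_eq (Nat.sub_le τ 1)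
    have h3 := hY.condExp_ae_eq (le_refl (τ - 1))
    filter_upwards [h1, h2, h3] with ω e1 e2 e3
    show (P[Y τ - Y (τ - 1)|ℱ (τ - 1)]) ω = (0 : Ω → ℝ) ω
    rw [e1]
    simp only [Pi.sub_apply, Pi.zero_apply, e2, e3, sub_self]
  have hdsq_int : ∀ τ : ℕ, 2 ≤ τ →
      Integrable (fun ω' => (Y τ ω' - Y (τ - 1) ω') ^ 2) P := by
    intro τ h
    refine hbint _ (α ^ 2) ((hdm τ).pow_const 2) ?_
    filter_upwards [hbdd τ h] with ω hω
    rw [abs_pow]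
    exact pow_le_pow_left₀ (abs_nonneg _) hω 2
  -- the bad windows
  set D : ℕ → ℕ → Set Ω := fun k t =>
    {ω : Ω | 2 ≤ t ∧ X t ω ≤ Y t ω ∧ (2 : ℝ) ^ k < X t ω ∧ X t ω ≤ 2 ^ (k + 1)}
    with hD
  have hDmeas : ∀ k t, MeasurableSet (D k t) := by
    intro k t
    by_cases ht : 2 ≤ t
    · have hXt : Measurable (X t) := (hXmeas t ht).mono (ℱ.le (t - 1)) le_rfl
      have : D k t = {ω | X t ω ≤ Y t ω} ∩
          ({ω | (2 : ℝ) ^ k < X t ω} ∩ {ω | X t ω ≤ 2 ^ (k + 1)}) := by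
        ext ω; simp [hD, ht, and_assoc]
      rw [this]
      exact (measurableSet_le hXt (hYm t)).inter
        ((measurableSet_lt measurable_const hXt).inter
          (measurableSet_le hXt measurable_const))
    · have : D k t = ∅ := by ext ω; simp [hD, ht]
      simp [this]
  -- main quantitative estimate
  have key : ∀ k T : ℕ, 2 ≤ T →
      P (⋃ t ∈ Finset.Icc 2 T, D k t) ≤ ENNReal.ofReal (2 * c₁ * (1 / 2) ^ k) := by
    intro k T hT2
    set B : ℝ := 2 ^ (k + 1) with hB
    have hBpos : (0 : ℝ) < B := by positivity
    -- the stopping time controlling the size of X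
    set u : ℕ → Ω → ℝ := fun s ω => if 1 ≤ s then X (s + 1) ω else 0 with hu
    have hu_adapted : Adapted ℱ u := by
      intro s
      by_cases hs : 1 ≤ s
      · have hus : u s = X (s + 1) := by funext ω; simp [hu, hs]
        rw [hus]
        have hm := hXmeas (s + 1) (by omega)
        have h1 : s + 1 - 1 = s := by omega
        rw [h1] at hm
        exact hm
      · have hus : u s = fun _ => (0 : ℝ) := by funext ω; simp [hu, hs]
        rw [hus]; exact measurable_const
    set σt : Ω → ℕ := hittingBtwn u (Set.Ioi B) 1 T with hσt
    have hσ_st : IsStoppingTime ℱ (fun ω => (σt ω : WithTop ℕ)) := hu_adapted.isStoppingTime_hittingBtwn measurableSet_Ioi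
    -- the stopping time of first bad window
    set v : ℕ → Ω → ℝ := fun t ω => if ω ∈ D k t then 1 else 0 with hv
    have hv_adapted : Adapted ℱ v := by
      intro t
      by_cases ht : 2 ≤ t
      · have hXt : Measurable[ℱ t] (X t) :=
          (hXmeas t ht).mono (ℱ.mono (Nat.sub_le t 1)) le_rfl
        have hYt : Measurable[ℱ t] (Y t) := (hY.stronglyAdapted t).measurable
        have hset : MeasurableSet[ℱ t] (D k t) := by
          have hDt : D k t = {ω | X t ω ≤ Y t ω} ∩
              ({ω | (2 : ℝ) ^ k < X t ω} ∩ {ω | X t ω ≤ 2 ^ (k + 1)}) := by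
            ext ω; simp [hD, ht, and_assoc]
          rw [hDt]
          exact (measurableSet_le hXt hYt).inter
            ((measurableSet_lt measurable_const hXt).inter
              (measurableSet_le hXt measurable_const))
        exact (Measurable.ite (by simpa using hset) measurable_const
          measurable_const)
      · have hvt : v t = fun _ => (0 : ℝ) := by
          funext ω
          have : ω ∉ D k t := by simp [hD, ht]
          simp [hv, this]
        rw [hvt]; exact measurable_const
    set ρt : Ω → ℕ := hittingBtwn v ({1} : Set ℝ) 2 T with hρt
    have hρ_st : IsStoppingTime ℱ (fun ω => (ρt ω : WithTop ℕ)) :=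
      hv_adapted.isStoppingTime_hittingBtwn (measurableSet_singleton 1)
    set π : Ω → ℕ := fun ω => min (ρt ω) (σt ω) with hπ
    have hπ_st : IsStoppingTime ℱ (fun ω => (π ω : WithTop ℕ)) := by
      intro i
      have e : {ω | (π ω : WithTop ℕ) ≤ i} =
          {ω | (ρt ω : WithTop ℕ) ≤ i} ∪ {ω | (σt ω : WithTop ℕ) ≤ i} := by
        ext ω; simp [hπ]
      have := (hρ_st i).union (hσ_st i)
      exact e ▸ this
    have hπ1 : ∀ ω, 1 ≤ π ω := fun ω =>
      le_min ((by omega : (1 : ℕ) ≤ 2).trans (le_hittingBtwn hT2 ω))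
        (le_hittingBtwn (by omega) ω)
    have hπT : ∀ ω, π ω ≤ T := fun ω => (min_le_right _ _).trans (hittingBtwn_le ω)
    have hXleB : ∀ ω, ∀ j : ℕ, 2 ≤ j → j ≤ σt ω → X j ω ≤ B := by
      intro ω j h2 hj
      by_contra hgt
      push_neg at hgt
      have hσT : σt ω ≤ T := hittingBtwn_le ω
      have h1j : 1 ≤ j - 1 := by omega
      have hmem : u (j - 1) ω ∈ Set.Ioi B := by
        have hj1 : j - 1 + 1 = j := by omega
        show (if 1 ≤ j - 1 then X (j - 1 + 1) ω else 0) ∈ Set.Ioi B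
        rw [if_pos h1j, hj1]
        exact hgt
      have hle : σt ω ≤ j - 1 :=
        hittingBtwn_le_of_mem h1j (by omega) hmem
      omega
    have hstop : ∀ τ : ℕ, 1 ≤ τ → MeasurableSet[ℱ (τ - 1)] {ω | τ ≤ π ω} := by
      intro τ hτ
      have h := (hπ_st (τ - 1)).compl
      have heq : {ω | τ ≤ π ω} = {ω | π ω ≤ τ - 1}ᶜ := by
        ext ω; simp only [Set.mem_compl_iff, Set.mem_setOf_eq, not_le]; omega
      have heq2 : {ω | ((π ω : ℕ) : WithTop ℕ) ≤ ((τ - 1 : ℕ) : WithTop ℕ)} =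
          {ω | π ω ≤ τ - 1} := by ext ω; simp
      rw [heq, ← heq2]; exact h
    have hstopm0 : ∀ τ : ℕ, 1 ≤ τ → MeasurableSet {ω | τ ≤ π ω} := fun τ h =>
      (ℱ.le (τ - 1)) _ (hstop τ h)
    -- the stopped increments
    set g : ℕ → Ω → ℝ := fun τ ω => if τ ≤ π ω then Y τ ω - Y (τ - 1) ω else 0 with hg
    have hgm : ∀ τ : ℕ, 1 ≤ τ → Measurable (g τ) := fun τ h =>
      Measurable.ite (hstopm0 τ h) (hdm τ) measurable_const
    have hgb : ∀ᵐ ω ∂P, ∀ τ : ℕ, 2 ≤ τ → |g τ ω| ≤ α := by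
      filter_upwards [hdb] with ω hω τ hτ
      simp only [hg]
      split
      · exact hω τ hτ
      · simpa using hα.le
    set G : Ω → ℝ := fun ω => ∑ τ ∈ Finset.Icc 2 T, g τ ω with hG
    have hGm : Measurable G :=
      Finset.measurable_sum _ fun τ hτ =>
        hgm τ (by simp only [Finset.mem_Icc] at hτ; omega)
    have hGb : ∀ᵐ ω ∂P, |G ω| ≤ (T : ℝ) * α := by
      filter_upwards [hgb] with ω hω
      calc |G ω| ≤ ∑ τ ∈ Finset.Icc 2 T, |g τ ω| := Finset.abs_sum_le_sum_abs _ _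
        _ ≤ ∑ _τ ∈ Finset.Icc 2 T, α := by
            refine Finset.sum_le_sum fun τ hτ => ?_
            exact hω τ (by simp only [Finset.mem_Icc] at hτ; omega)
        _ = ((Finset.Icc 2 T).card : ℝ) * α := by
            rw [Finset.sum_const, nsmul_eq_mul]
        _ ≤ (T : ℝ) * α := by
            have hcard : (Finset.Icc 2 T).card ≤ T := by
              rw [Nat.card_Icc]; omega
            exact mul_le_mul_of_nonneg_right (by exact_mod_cast hcard) hα.le
    have hGsqInt : Integrable (fun ω => G ω ^ 2) P := by
      refine hbint _ (((T : ℝ) * α) ^ 2) (hGm.pow_const 2) ?_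
      filter_upwards [hGb] with ω h
      rw [abs_pow]
      exact pow_le_pow_left₀ (abs_nonneg _) h 2
    have hprod_int : ∀ τ τ' : ℕ, 2 ≤ τ → 2 ≤ τ' →
        Integrable (fun ω => g τ ω * g τ' ω) P := by
      intro τ τ' h h'
      refine hbint _ (α * α) ((hgm τ (by omega)).mul (hgm τ' (by omega))) ?_
      filter_upwards [hgb] with ω hω
      rw [abs_mul]
      exact mul_le_mul (hω τ h) (hω τ' h') (abs_nonneg _) hα.le
    -- the cross terms vanish
    have hcross : ∀ τ τ' : ℕ, 2 ≤ τ → τ < τ' → τ' ≤ T →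
        ∫ ω, g τ ω * g τ' ω ∂P = 0 := by
      intro τ τ' h2 hlt hT
      have h2' : 2 ≤ τ' := by omega
      have hm' : ℱ (τ' - 1) ≤ m0 := ℱ.le _
      set f : Ω → ℝ := fun ω => g τ ω * (if τ' ≤ π ω then 1 else 0) with hf
      have hfsm : StronglyMeasurable[ℱ (τ' - 1)] f := by
        have hgτ : Measurable[ℱ (τ' - 1)] (g τ) := by
          refine Measurable.ite ?_ ?_ measurable_const
          · exact (ℱ.mono (by omega : τ - 1 ≤ τ' - 1)) _ (hstop τ (by omega))
          · exact ((hY.stronglyAdapted τ).measurable.mono (ℱ.mono (by omega)) le_rfl).sub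
              ((hY.stronglyAdapted (τ - 1)).measurable.mono (ℱ.mono (by omega)) le_rfl)
        have hind : Measurable[ℱ (τ' - 1)] fun ω => if τ' ≤ π ω then (1 : ℝ) else 0 :=
          Measurable.ite (hstop τ' (by omega)) measurable_const measurable_const
        exact (hgτ.mul hind).stronglyMeasurable
      have hfb : ∀ᵐ ω ∂P, ‖f ω‖ ≤ α := by
        filter_upwards [hgb] with ω hω
        rw [Real.norm_eq_abs, hf, abs_mul]
        calc |g τ ω| * |if τ' ≤ π ω then (1 : ℝ) else 0|
            ≤ α * 1 := by
              refine mul_le_mul (hω τ h2) ?_ (abs_nonneg _) hα.le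
              split <;> simp
          _ = α := mul_one α
      have hd'int : Integrable (fun ω => Y τ' ω - Y (τ' - 1) ω) P := by
        refine hbint _ α (hdm τ') ?_
        filter_upwards [hdb] with ω h
        exact h τ' h2'
      have hfd_int : Integrable (f * fun ω => Y τ' ω - Y (τ' - 1) ω) P :=
        hd'int.bdd_mul ((hfsm.mono hm').aestronglyMeasurable) hfb
      have hpull := condExp_stronglyMeasurable_mul_of_bound hm' hfsm hd'int α hfb
      have h0 := hcond0 τ' h2'
      have heq : ∀ ω, g τ ω * g τ' ω = f ω * (Y τ' ω - Y (τ' - 1) ω) := by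
        intro ω
        by_cases h : τ' ≤ π ω <;> simp [hf, hg, h]
      have hzero : P[f * fun ω => Y τ' ω - Y (τ' - 1) ω|ℱ (τ' - 1)] =ᵐ[P] 0 := by
        refine hpull.trans ?_
        filter_upwards [h0] with ω hω
        show f ω * (P[fun ω => Y τ' ω - Y (τ' - 1) ω|ℱ (τ' - 1)]) ω = (0 : Ω → ℝ) ω
        rw [hω]
        simp
      calc ∫ ω, g τ ω * g τ' ω ∂P
          = ∫ ω, (f * fun ω' => Y τ' ω' - Y (τ' - 1) ω') ω ∂P := by
            refine integral_congr_ae (Eventually.of_forall fun ω => ?_)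
            simpa using heq ω
        _ = ∫ ω, (P[f * fun ω' => Y τ' ω' - Y (τ' - 1) ω'|ℱ (τ' - 1)]) ω ∂P :=
            (integral_condExp hm').symm
        _ = ∫ ω, (0 : Ω → ℝ) ω ∂P := integral_congr_ae hzero
        _ = 0 := by simp
    -- diagonal terms
    have hdiag : ∀ τ : ℕ, 2 ≤ τ → ∫ ω, g τ ω * g τ ω ∂P
        = ∫ ω, (if τ ≤ π ω then (1 : ℝ) else 0) *
            (P[fun ω' => (Y τ ω' - Y (τ - 1) ω') ^ 2|ℱ (τ - 1)]) ω ∂P := by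
      intro τ h2
      have hm' : ℱ (τ - 1) ≤ m0 := ℱ.le _
      set e : Ω → ℝ := fun ω => if τ ≤ π ω then (1 : ℝ) else 0 with he
      have hesm : StronglyMeasurable[ℱ (τ - 1)] e :=
        (Measurable.ite (hstop τ (by omega)) measurable_const
          measurable_const).stronglyMeasurable
      have heb : ∀ᵐ ω ∂P, ‖e ω‖ ≤ 1 := by
        filter_upwards with ω
        rw [Real.norm_eq_abs]
        simp only [he]
        split <;> simp
      have hdsq : Integrable (fun ω' => (Y τ ω' - Y (τ - 1) ω') ^ 2) P :=
        hdsq_int τ h2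
      have hedsq_int : Integrable (e * fun ω' => (Y τ ω' - Y (τ - 1) ω') ^ 2) P :=
        hdsq.bdd_mul ((hesm.mono hm').aestronglyMeasurable) heb
      have hpull := condExp_stronglyMeasurable_mul_of_bound hm' hesm hdsq 1 heb
      have heq : ∀ ω, g τ ω * g τ ω = e ω * (Y τ ω - Y (τ - 1) ω) ^ 2 := by
        intro ω
        by_cases h : τ ≤ π ω <;> simp [hg, he, h] <;> ring
      calc ∫ ω, g τ ω * g τ ω ∂P
          = ∫ ω, (e * fun ω' => (Y τ ω' - Y (τ - 1) ω') ^ 2) ω ∂P := by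
            refine integral_congr_ae (Eventually.of_forall fun ω => ?_)
            simpa using heq ω
        _ = ∫ ω, (P[e * fun ω' => (Y τ ω' - Y (τ - 1) ω') ^ 2|ℱ (τ - 1)]) ω ∂P :=
            (integral_condExp hm').symm
        _ = ∫ ω, (e * P[fun ω' => (Y τ ω' - Y (τ - 1) ω') ^ 2|ℱ (τ - 1)]) ω ∂P :=
            integral_congr_ae hpull
        _ = _ := by
            refine integral_congr_ae (Eventually.of_forall fun ω => ?_)
            simp [he]
    have hint_cond : ∀ τ : ℕ, 2 ≤ τ →
        Integrable (fun ω => (if τ ≤ π ω then (1 : ℝ) else 0) *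
          (P[fun ω' => (Y τ ω' - Y (τ - 1) ω') ^ 2|ℱ (τ - 1)]) ω) P := by
      intro τ h
      refine integrable_condExp.bdd_mul (c := 1)
        ((Measurable.ite (hstopm0 τ (by omega)) measurable_const
          measurable_const).aestronglyMeasurable) ?_
      filter_upwards with ω
      rw [Real.norm_eq_abs]
      split <;> simp
    -- expansion of the second moment
    have hexp : ∀ ω, G ω ^ 2 =
        ∑ τ ∈ Finset.Icc 2 T, ∑ τ' ∈ Finset.Icc 2 T, g τ ω * g τ' ω := by
      intro ω
      rw [sq]
      exact Finset.sum_mul_sum _ _ _ _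
    have hsum : ∫ ω, G ω ^ 2 ∂P = ∑ τ ∈ Finset.Icc 2 T,
        ∫ ω, (if τ ≤ π ω then (1 : ℝ) else 0) *
          (P[fun ω' => (Y τ ω' - Y (τ - 1) ω') ^ 2|ℱ (τ - 1)]) ω ∂P := by
      have hmem2 : ∀ τ ∈ Finset.Icc 2 T, 2 ≤ τ := fun τ hτ => by
        simp only [Finset.mem_Icc] at hτ; omega
      have hmemT : ∀ τ ∈ Finset.Icc 2 T, τ ≤ T := fun τ hτ => by
        simp only [Finset.mem_Icc] at hτ; omega
      calc ∫ ω, G ω ^ 2 ∂P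
          = ∫ ω, ∑ τ ∈ Finset.Icc 2 T, ∑ τ' ∈ Finset.Icc 2 T, g τ ω * g τ' ω ∂P := by
            exact integral_congr_ae (Eventually.of_forall fun ω => hexp ω)
        _ = ∑ τ ∈ Finset.Icc 2 T, ∫ ω, ∑ τ' ∈ Finset.Icc 2 T, g τ ω * g τ' ω ∂P := by
            refine integral_finset_sum _ fun τ hτ => ?_
            exact integrable_finset_sum _ fun τ' hτ' =>
              hprod_int τ τ' (hmem2 τ hτ) (hmem2 τ' hτ')
        _ = ∑ τ ∈ Finset.Icc 2 T, ∑ τ' ∈ Finset.Icc 2 T, ∫ ω, g τ ω * g τ' ω ∂P := by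
            refine Finset.sum_congr rfl fun τ hτ => ?_
            exact integral_finset_sum _ fun τ' hτ' =>
              hprod_int τ τ' (hmem2 τ hτ) (hmem2 τ' hτ')
        _ = ∑ τ ∈ Finset.Icc 2 T, ∫ ω, g τ ω * g τ ω ∂P := by
            refine Finset.sum_congr rfl fun τ hτ => ?_
            refine Finset.sum_eq_single_of_mem τ hτ fun τ' hτ' hne => ?_
            rcases hne.lt_or_gt with hlt | hlt
            · have := hcross τ' τ (hmem2 τ' hτ') hlt (hmemT τ hτ)
              calc ∫ ω, g τ ω * g τ' ω ∂P = ∫ ω, g τ' ω * g τ ω ∂P := by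
                    simp_rw [mul_comm]
                _ = 0 := this
            · exact hcross τ τ' (hmem2 τ hτ) hlt (hmemT τ' hτ')
        _ = _ := Finset.sum_congr rfl fun τ hτ => hdiag τ (hmem2 τ hτ)
    -- identify with the compensator at the stopping time
    have hWπ : ∀ ω, ∑ τ ∈ Finset.Icc 2 T, (if τ ≤ π ω then (1 : ℝ) else 0) *
        (P[fun ω' => (Y τ ω' - Y (τ - 1) ω') ^ 2|ℱ (τ - 1)]) ω = W (π ω) ω := by
      intro ω
      have hfil : Finset.Icc 2 (π ω) = (Finset.Icc 2 T).filter (fun τ => τ ≤ π ω) := by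
        ext a
        simp only [Finset.mem_Icc, Finset.mem_filter]
        have := hπT ω
        omega
      rw [congrFun (hW (π ω)) ω, hfil, Finset.sum_filter]
      refine Finset.sum_congr rfl fun τ _ => ?_
      split <;> simp
    have hsum2 : ∑ τ ∈ Finset.Icc 2 T,
        ∫ ω, (if τ ≤ π ω then (1 : ℝ) else 0) *
          (P[fun ω' => (Y τ ω' - Y (τ - 1) ω') ^ 2|ℱ (τ - 1)]) ω ∂P
        = ∫ ω, W (π ω) ω ∂P := by
      rw [← integral_finset_sum _ (fun τ hτ => hint_cond τ
        (by simp only [Finset.mem_Icc] at hτ; omega))]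
      exact integral_congr_ae (Eventually.of_forall fun ω => hWπ ω)
    have hWπ_int : Integrable (fun ω => W (π ω) ω) P := by
      have := integrable_finset_sum (μ := P) (Finset.Icc 2 T)
        (f := fun τ ω => (if τ ≤ π ω then (1 : ℝ) else 0) *
          (P[fun ω' => (Y τ ω' - Y (τ - 1) ω') ^ 2|ℱ (τ - 1)]) ω)
        (fun τ hτ => hint_cond τ (by simp only [Finset.mem_Icc] at hτ; omega))
      exact this.congr (Eventually.of_forall fun ω => hWπ ω)
    have hWbound : ∫ ω, W (π ω) ω ∂P ≤ c₁ * B := by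
      have hub : ∀ᵐ ω ∂P, W (π ω) ω ≤ c₁ * B := by
        filter_upwards [hWX] with ω hω
        rcases le_or_gt 2 (π ω) with h2 | h2
        · have hXB : X (π ω) ω ≤ B := hXleB ω (π ω) h2 (min_le_right _ _)
          calc W (π ω) ω ≤ c₁ * X (π ω) ω := hω (π ω)
            _ ≤ c₁ * B := by nlinarith
        · have h1 : π ω = 1 := by have := hπ1 ω; omega
          rw [h1, congrFun (hW 1) ω, Finset.Icc_eq_empty (by omega)]
          simp only [Finset.sum_empty]
          positivity
      calc ∫ ω, W (π ω) ω ∂P ≤ ∫ _ω, c₁ * B ∂P :=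
            integral_mono_ae hWπ_int (integrable_const _) hub
        _ = c₁ * B := by simp
    have hG2 : ∫ ω, G ω ^ 2 ∂P ≤ c₁ * B := by
      rw [hsum, hsum2]; exact hWbound
    -- Chebyshev
    set A : Set Ω := ⋃ t ∈ Finset.Icc 2 T, D k t with hA
    have hAmeas : MeasurableSet A :=
      (Finset.Icc 2 T).measurableSet_biUnion fun t _ => hDmeas k t
    have hlow : ∀ᵐ ω ∂P, ω ∈ A → ((2 : ℝ) ^ k) ^ 2 ≤ G ω ^ 2 := by
      filter_upwards [hY1, hXincr] with ω h1 hmono hmem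
      have hex : ∃ j ∈ Set.Icc 2 T, v j ω ∈ ({1} : Set ℝ) := by
        simp only [hA, Set.mem_iUnion, exists_prop] at hmem
        obtain ⟨t, ht, hDt⟩ := hmem
        refine ⟨t, ?_, ?_⟩
        · simp only [Finset.mem_Icc] at ht
          exact ht
        · simp [hv, hDt]
      have hρD : ω ∈ D k (ρt ω) := by
        have hmem1 := hittingBtwn_mem_set hex
        by_contra hcon
        rw [hρt] at hcon
        simp [hv, hcon] at hmem1
        simp only [hv] at hcon
        exact hcon hmem1
      have hρ2 : 2 ≤ ρt ω := hρD.1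
      have hXY : X (ρt ω) ω ≤ Y (ρt ω) ω := hρD.2.1
      have hXk : (2 : ℝ) ^ k < X (ρt ω) ω := hρD.2.2.1
      have hXB : X (ρt ω) ω ≤ B := hρD.2.2.2
      have hρσ : ρt ω ≤ σt ω := by
        by_contra hc
        push_neg at hc
        have hρT : ρt ω ≤ T := hittingBtwn_le ω
        obtain ⟨j, hj, hjmem⟩ := (hittingBtwn_lt_iff (ρt ω) hρT).1 hc
        have h1j : 1 ≤ j := hj.1
        have hj2 : j < ρt ω := hj.2
        have hXj : B < X (j + 1) ω := by
          have : u j ω ∈ Set.Ioi B := hjmem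
          rw [hu] at this
          simpa [h1j] using this
        have hmono' : Monotone fun s => X s ω := monotone_nat_of_le_succ hmono
        have hle : X (j + 1) ω ≤ X (ρt ω) ω := hmono' (by omega : j + 1 ≤ ρt ω)
        linarith
      have hπρ : π ω = ρt ω := min_eq_left hρσ
      have hGY : G ω = Y (π ω) ω := by
        have hfil : Finset.Icc 2 (π ω) = (Finset.Icc 2 T).filter (fun τ => τ ≤ π ω) := by
          ext a
          simp only [Finset.mem_Icc, Finset.mem_filter]
          have := hπT ω
          omega
        calc G ω = ∑ τ ∈ Finset.Icc 2 T,
              if τ ≤ π ω then Y τ ω - Y (τ - 1) ω else 0 := rfl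
          _ = ∑ τ ∈ (Finset.Icc 2 T).filter (fun τ => τ ≤ π ω),
              (Y τ ω - Y (τ - 1) ω) := (Finset.sum_filter _ _).symm
          _ = ∑ τ ∈ Finset.Icc 2 (π ω), (Y τ ω - Y (τ - 1) ω) := by rw [hfil]
          _ = Y (π ω) ω - Y 1 ω := telescope_sum' (fun s => Y s ω) (hπ1 ω)
          _ = Y (π ω) ω := by rw [h1]; ring
      have hYlow : (2 : ℝ) ^ k ≤ G ω := by
        rw [hGY, hπρ]
        linarith
      exact pow_le_pow_left₀ (by positivity) hYlow 2
    have hcheb : ((2 : ℝ) ^ k) ^ 2 * (P A).toReal ≤ c₁ * B := by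
      have hconst : IntegrableOn (fun _ω : Ω => ((2 : ℝ) ^ k) ^ 2) A P :=
        (integrable_const _).integrableOn
      have hiA : ∫ ω in A, ((2 : ℝ) ^ k) ^ 2 ∂P ≤ ∫ ω in A, G ω ^ 2 ∂P :=
        setIntegral_mono_ae_restrict hconst hGsqInt.integrableOn
          ((ae_restrict_iff' hAmeas).2 hlow)
      have hiA2 : ∫ ω in A, G ω ^ 2 ∂P ≤ ∫ ω, G ω ^ 2 ∂P :=
        setIntegral_le_integral hGsqInt (Eventually.of_forall fun ω => sq_nonneg _)
      have hiA3 : ∫ _ω in A, ((2 : ℝ) ^ k) ^ 2 ∂P = (P A).toReal * ((2 : ℝ) ^ k) ^ 2 := by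
        rw [setIntegral_const, smul_eq_mul]; rfl
      rw [mul_comm]
      calc (P A).toReal * ((2 : ℝ) ^ k) ^ 2
          = ∫ _ω in A, ((2 : ℝ) ^ k) ^ 2 ∂P := hiA3.symm
        _ ≤ ∫ ω, G ω ^ 2 ∂P := le_trans hiA hiA2
        _ ≤ c₁ * B := hG2
    have hne : P A ≠ ⊤ := measure_ne_top _ _
    rw [← ENNReal.ofReal_toReal hne]
    apply ENNReal.ofReal_le_ofReal
    have h2k : (0 : ℝ) < 2 ^ k := by positivity
    have hPnn : 0 ≤ (P A).toReal := ENNReal.toReal_nonneg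
    have hkey2 : (P A).toReal * 2 ^ k * 2 ^ k ≤ 2 * c₁ * 2 ^ k := by
      have hBeq : B = 2 ^ k * 2 := by rw [hB, pow_succ]
      nlinarith [hcheb]
    have hfin : (P A).toReal * 2 ^ k ≤ 2 * c₁ := le_of_mul_le_mul_right hkey2 h2k
    have h12 : ((1 : ℝ) / 2) ^ k = ((2 : ℝ) ^ k)⁻¹ := by
      rw [one_div, inv_pow]
    rw [h12, ← div_eq_mul_inv, le_div_iff₀ h2k]
    exact hfin
  -- Borel–Cantelli
  set Ainf : ℕ → Set Ω := fun k => ⋃ t, D k t with hAinf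
  have hPAinf : ∀ k, P (Ainf k) ≤ ENNReal.ofReal (2 * c₁ * (1 / 2) ^ k) := by
    intro k
    have hmonoT : Monotone fun T => ⋃ t ∈ Finset.Icc 2 T, D k t := by
      intro a b hab
      refine Set.iUnion_mono fun t => Set.iUnion_subset fun ht => ?_
      simp only [Finset.mem_Icc] at ht
      exact Set.subset_iUnion_of_subset (by simp only [Finset.mem_Icc]; omega)
        subset_rfl
    have hUnion : ⋃ T, ⋃ t ∈ Finset.Icc 2 T, D k t = Ainf k := by
      ext ω
      simp only [hAinf, Set.mem_iUnion, exists_prop]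
      constructor
      · rintro ⟨T, t, _ht, h⟩
        exact ⟨t, h⟩
      · rintro ⟨t, h⟩
        have h2t : 2 ≤ t := h.1
        exact ⟨t, t, by simp only [Finset.mem_Icc]; omega, h⟩
    have htend := tendsto_measure_iUnion_atTop (μ := P) hmonoT
    rw [hUnion] at htend
    apply le_of_tendsto htend
    filter_upwards [eventually_ge_atTop 2] with T hT
    exact key k T hT
  have htsum : ∑' k, P (Ainf k) ≠ ⊤ := by
    have hle := ENNReal.tsum_le_tsum hPAinf
    have hfin : ∑' k : ℕ, ENNReal.ofReal (2 * c₁ * (1 / 2) ^ k) ≠ ⊤ := by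
      have hsummable : Summable fun k : ℕ => 2 * c₁ * (1 / 2 : ℝ) ^ k :=
        (summable_geometric_of_lt_one (by norm_num) (by norm_num)).mul_left (2 * c₁)
      rw [← ENNReal.ofReal_tsum_of_nonneg (fun k => by positivity) hsummable]
      exact ENNReal.ofReal_ne_top
    exact ne_top_of_le_ne_top hfin hle
  have hlimsup : P (limsup Ainf atTop) = 0 := measure_limsup_atTop_eq_zero htsum
  have hae : ∀ᵐ ω ∂P, ω ∉ limsup Ainf atTop := measure_eq_zero_iff_ae_notMem.mp hlimsup
  filter_upwards [hae, hXtop] with ω hω hXt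
  -- extract a level beyond which no bad window occurs
  have hK : ∃ K : ℕ, ∀ k, K ≤ k → ω ∉ Ainf k := by
    rw [limsup_eq_iInf_iSup_of_nat] at hω
    simp only [Set.iInf_eq_iInter, Set.iSup_eq_iUnion, Set.mem_iInter, Set.mem_iUnion,
      not_forall, not_exists] at hω
    obtain ⟨K, hK⟩ := hω
    exact ⟨K, fun k hk => hK k hk⟩
  obtain ⟨K, hK⟩ := hK
  obtain ⟨N, hN⟩ := eventually_atTop.1 (hXt.eventually_gt_atTop ((2 : ℝ) ^ K))
  refine Set.Finite.subset (Set.finite_Iio (max N 2)) ?_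
  intro t ht
  by_contra hcon
  simp only [Set.mem_Iio, not_lt] at hcon
  have ht2 : 2 ≤ t := le_trans (le_max_right _ _) hcon
  have hXK : (2 : ℝ) ^ K < X t ω := hN t (le_trans (le_max_left _ _) hcon)
  obtain ⟨M, hM⟩ := pow_unbounded_of_one_lt (X t ω) (by norm_num : (1 : ℝ) < 2)
  set Q : ℕ → Prop := fun k => (2 : ℝ) ^ k < X t ω with hQ
  have hKQ : Q K := hXK
  have hKM : K ≤ M := by
    by_contra h
    push_neg at h
    have : (2 : ℝ) ^ M ≤ 2 ^ K := pow_le_pow_right₀ (by norm_num) h.le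
    linarith
  set k₀ := Nat.findGreatest Q M with hk0
  have hQk₀ : Q k₀ := Nat.findGreatest_spec hKM hKQ
  have hKk₀ : K ≤ k₀ := Nat.le_findGreatest hKM hKQ
  have hupper : X t ω ≤ 2 ^ (k₀ + 1) := by
    rcases le_or_gt (k₀ + 1) M with h | h
    · have hng := Nat.findGreatest_is_greatest (by omega : k₀ < k₀ + 1) h
      rw [hQ] at hng
      simpa [not_lt] using hng
    · exfalso
      have hk₀M : k₀ = M := by
        have := Nat.findGreatest_le (P := Q) (n := M)
        omega
      rw [hk₀M] at hQk₀
      rw [hQ] at hQk₀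
      linarith
  exact hK k₀ hKk₀ (Set.mem_iUnion.2 ⟨t, ⟨ht2, ht, hQk₀, hupper⟩⟩)
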